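/- Let N be a natural number and p, λ, β, ω real numbers with 1 < p < N, λ > 0, β > 0, ω > 0. Let φ, g : ℝ → ℝ with φ continuously differentiable on [1,∞), φ(r) > 0 for all r ≥ 1, g continuous on [1,∞) with g(r) > 0 for all r ≥ 1, F satisfying the radial eigenvalue ODE on (1,∞), the Robin condition φ'(1) = β^(1/(p−1))·φ(1), and r_* > 1 with φ'(r_*) = 0. Assume moreover that r ↦ r^(N−1)·g(r) is Lebesgue integrable on (1,∞) with I_g := ∫_1^∞ r^(N−1)·g(r) dr, that r ↦ r^(N−1)·g(r)·φ(r)^p is Lebesgue integrable on (1,∞), and that ω·∫_1^∞ r^(N−1)·g(r)·φ(r)^p dr = 1. Then φ(1) ≥ (ω·I_g)^(−1/p) / (1 + ((p−1)/(N−p))·β^(1/(p−1))). -/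

import Mathlib

open Real Set MeasureTheory

/-- The radial quantity `F(r) = r^(N-1) |φ'(r)|^(p-2) φ'(r)`, written with
real exponents via the sign function. -/
noncomputable def radialF (N : ℕ) (p : ℝ) (φ : ℝ → ℝ) (r : ℝ) : ℝ :=
  r ^ ((N : ℝ) - 1) * Real.sign (deriv φ r) * |deriv φ r| ^ (p - 1)

/-- If `d < 0` then `sign d * |d| ^ q < 0`. -/
lemma aux_sign_rpow_neg {d q : ℝ} (hd : d < 0) : Real.sign d * |d| ^ q < 0 := by
  rw [Real.sign_of_neg hd]
  have : (0 : ℝ) < |d| ^ q := Real.rpow_pos_of_pos (abs_pos.mpr hd.ne) q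
  nlinarith

/-- If `0 ≤ d` then `0 ≤ sign d * |d| ^ q`. -/
lemma aux_sign_rpow_nonneg {d q : ℝ} (hd : 0 ≤ d) : 0 ≤ Real.sign d * |d| ^ q := by
  rcases hd.eq_or_lt with h | h
  · simp [← h, Real.sign_zero]
  · rw [Real.sign_of_pos h]
    have : (0 : ℝ) < |d| ^ q := Real.rpow_pos_of_pos (abs_pos.mpr h.ne') q
    nlinarith

set_option maxHeartbeats 1000000 in
/-- Lower bound on the boundary value `φ(1)` in Theorem 1.4(a):
`φ(1) ≥ (ω I_g)^(-1/p) / (1 + ((p-1)/(N-p)) β^(1/(p-1)))`. -/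
theorem boundary_value_lower (N : ℕ) (p lam β ω : ℝ)
    (hp : 1 < p) (hpN : p < N) (hlam : 0 < lam) (hβ : 0 < β) (hω : 0 < ω)
    (φ g : ℝ → ℝ)
    (hφdiff : ∀ r ≥ (1 : ℝ), DifferentiableAt ℝ φ r)
    (hφC1 : ContinuousOn (deriv φ) (Set.Ici 1))
    (hφpos : ∀ r ≥ (1 : ℝ), 0 < φ r)
    (hgcont : ContinuousOn g (Set.Ici 1))
    (hgpos : ∀ r ≥ (1 : ℝ), 0 < g r)
    (hODE : ∀ r > (1 : ℝ),
      HasDerivAt (radialF N p φ) (-(lam * r ^ ((N : ℝ) - 1) * g r * φ r ^ (p - 1))) r)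
    (hRobin : deriv φ 1 = β ^ (1 / (p - 1)) * φ 1)
    (rstar : ℝ) (hrstar : 1 < rstar) (hcrit : deriv φ rstar = 0)
    (hIg : IntegrableOn (fun r : ℝ => r ^ ((N : ℝ) - 1) * g r) (Set.Ioi 1))
    (hInt : IntegrableOn (fun r : ℝ => r ^ ((N : ℝ) - 1) * g r * φ r ^ p) (Set.Ioi 1))
    (hNorm : ω * ∫ r in Set.Ioi (1 : ℝ), r ^ ((N : ℝ) - 1) * g r * φ r ^ p = 1) :
    (ω * ∫ r in Set.Ioi (1 : ℝ), r ^ ((N : ℝ) - 1) * g r) ^ (-(1 : ℝ) / p) /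
        (1 + ((p - 1) / ((N : ℝ) - p)) * β ^ (1 / (p - 1))) ≤ φ 1 := by
  have hp1 : (0 : ℝ) < p - 1 := by linarith
  have hNp : (0 : ℝ) < (N : ℝ) - p := by linarith
  have hp0 : (0 : ℝ) < p := by linarith
  set b : ℝ := β ^ (1 / (p - 1)) with hbdef
  have hb : 0 < b := Real.rpow_pos_of_pos hβ _
  have hφ1 : 0 < φ 1 := hφpos 1 le_rfl
  have hd1 : 0 < deriv φ 1 := by rw [hRobin]; positivity
  set F : ℝ → ℝ := radialF N p φ with hFdef
  -- continuity of F on [1,∞)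
  have hFcont : ContinuousOn F (Ici 1) := by
    intro x hx
    rcases eq_or_lt_of_le (mem_Ici.mp hx) with h1 | h1
    · subst h1
      have hcw : ContinuousWithinAt (deriv φ) (Ici (1 : ℝ)) 1 :=
        hφC1 1 (mem_Ici.mpr le_rfl)
      have hev : ∀ᶠ y in nhdsWithin 1 (Ici (1 : ℝ)), 0 < deriv φ y :=
        hcw.eventually (eventually_gt_nhds hd1)
      have hG : ContinuousWithinAt
          (fun y : ℝ => y ^ ((N : ℝ) - 1) * deriv φ y ^ (p - 1)) (Ici 1) 1 := by
        apply ContinuousWithinAt.mul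
        · exact (continuousWithinAt_id).rpow_const (Or.inr (by linarith))
        · exact hcw.rpow_const (Or.inr (by linarith))
      apply hG.congr_of_eventuallyEq
      · filter_upwards [hev] with y hy
        simp only [hFdef, radialF, Real.sign_of_pos hy, abs_of_pos hy]
        ring
      · simp only [hFdef, radialF, Real.sign_of_pos hd1, abs_of_pos hd1]
        ring
    · exact ((hODE x h1).continuousAt).continuousWithinAt
  -- F strictly decreasing on [1,∞)
  have hFanti : StrictAntiOn F (Ici 1) := by
    apply strictAntiOn_of_deriv_neg (convex_Ici 1) hFcont
    intro x hx
    rw [interior_Ici] at hx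
    rw [(hODE x hx).deriv]
    have hx0 : (0 : ℝ) < x := lt_trans one_pos hx
    have h1 : (0 : ℝ) < x ^ ((N : ℝ) - 1) := Real.rpow_pos_of_pos hx0 _
    have h2 : 0 < g x := hgpos x hx.le
    have h3 : (0 : ℝ) < φ x ^ (p - 1) := Real.rpow_pos_of_pos (hφpos x hx.le) _
    have : 0 < lam * x ^ ((N : ℝ) - 1) * g x * φ x ^ (p - 1) := by positivity
    linarith
  have hFstar : F rstar = 0 := by
    simp [hFdef, radialF, hcrit, Real.sign_zero]
  have hbe : b ^ (p - 1) = β := by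
    rw [hbdef, ← Real.rpow_mul hβ.le, one_div, inv_mul_cancel₀ hp1.ne', Real.rpow_one]
  have hF1 : F 1 = β * φ 1 ^ (p - 1) := by
    simp only [hFdef, radialF, Real.sign_of_pos hd1, abs_of_pos hd1]
    rw [hRobin, Real.one_rpow, Real.mul_rpow hb.le hφ1.le, hbe]
    ring
  set e : ℝ := -(((N : ℝ) - 1) / (p - 1)) with hedef
  -- key derivative bound on [1, rstar]
  have key : ∀ s ∈ Icc (1 : ℝ) rstar, 0 ≤ deriv φ s ∧ deriv φ s ≤ b * φ 1 * s ^ e := by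
    intro s hs
    have hs1 : (1 : ℝ) ≤ s := hs.1
    have hs0 : (0 : ℝ) < s := lt_of_lt_of_le one_pos hs1
    have hsa : (0 : ℝ) < s ^ ((N : ℝ) - 1) := Real.rpow_pos_of_pos hs0 _
    have hFs_nonneg : 0 ≤ F s := by
      rcases eq_or_lt_of_le hs.2 with h | h
      · rw [h, hFstar]
      · have h2 := hFanti (mem_Ici.mpr hs1) (mem_Ici.mpr (by linarith : (1:ℝ) ≤ rstar)) h
        rw [hFstar] at h2
        linarith
    have hd_nonneg : 0 ≤ deriv φ s := by
      by_contra hneg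
      push_neg at hneg
      have hlt := aux_sign_rpow_neg (q := p - 1) hneg
      have hFneg : F s < 0 := by
        have heq : F s = s ^ ((N : ℝ) - 1) *
            (Real.sign (deriv φ s) * |deriv φ s| ^ (p - 1)) := by
          simp only [hFdef, radialF]; ring
        rw [heq]
        exact mul_neg_of_pos_of_neg hsa hlt
      linarith
    refine ⟨hd_nonneg, ?_⟩
    have hse : (0 : ℝ) < s ^ e := Real.rpow_pos_of_pos hs0 _
    rcases hd_nonneg.eq_or_lt with hd0 | hdpos
    · rw [← hd0]; positivity
    · have hFs_le : F s ≤ F 1 := by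
        rcases eq_or_lt_of_le hs1 with h | h
        · rw [← h]
        · exact (hFanti (mem_Ici.mpr le_rfl) (mem_Ici.mpr hs1) h).le
      rw [hF1] at hFs_le
      have hFs_eq : F s = s ^ ((N : ℝ) - 1) * deriv φ s ^ (p - 1) := by
        simp only [hFdef, radialF, Real.sign_of_pos hdpos, abs_of_pos hdpos]; ring
      rw [hFs_eq] at hFs_le
      have hrhs : (b * φ 1 * s ^ e) ^ (p - 1)
          = β * φ 1 ^ (p - 1) * s ^ (-((N : ℝ) - 1)) := by
        have hee : e * (p - 1) = -((N : ℝ) - 1) := by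
          rw [hedef]; field_simp
        rw [Real.mul_rpow (by positivity) hse.le, Real.mul_rpow hb.le hφ1.le, hbe,
          ← Real.rpow_mul hs0.le, hee]
      have hle2 : deriv φ s ^ (p - 1) ≤ (b * φ 1 * s ^ e) ^ (p - 1) := by
        rw [hrhs, Real.rpow_neg hs0.le, ← div_eq_mul_inv, le_div_iff₀ hsa]
        nlinarith [hFs_le]
      exact (Real.rpow_le_rpow_iff hdpos.le (by positivity) hp1).mp hle2
  -- comparison function ψ
  have hq : (0 : ℝ) < (p - 1) / ((N : ℝ) - p) := by positivity
  set K : ℝ := b * φ 1 * ((p - 1) / ((N : ℝ) - p)) with hKdef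
  have hK : 0 < K := by positivity
  set c : ℝ := ((N : ℝ) - p) / (p - 1) with hcdef
  have hc : 0 < c := by positivity
  set ψ : ℝ → ℝ := fun s => φ 1 + K * (1 - s ^ (-c)) with hψdef
  have hec : ∀ s : ℝ, 0 < s → HasDerivAt ψ (b * φ 1 * s ^ e) s := by
    intro s hs
    have h1 : HasDerivAt (fun y : ℝ => y ^ (-c)) (-c * s ^ (-c - 1)) s :=
      Real.hasDerivAt_rpow_const (Or.inl hs.ne')
    have h2 : HasDerivAt ψ (K * (0 - -c * s ^ (-c - 1))) s :=
      (((hasDerivAt_const s (1 : ℝ)).sub h1).const_mul K).const_add (φ 1)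
    have hexp : -c - 1 = e := by
      rw [hcdef, hedef]
      field_simp
      ring
    convert h2 using 1
    rw [← hexp, hKdef, hcdef]
    field_simp
    ring
  -- φ ≤ ψ on [1, rstar]
  have hψmono : MonotoneOn (fun s => ψ s - φ s) (Icc 1 rstar) := by
    apply monotoneOn_of_deriv_nonneg (convex_Icc 1 rstar)
    · apply ContinuousOn.sub
      · intro x hx
        exact ((hec x (by linarith [hx.1])).continuousAt).continuousWithinAt
      · intro x hx
        exact ((hφdiff x hx.1).continuousAt).continuousWithinAt
    · rw [interior_Icc]
      intro x hx
      exact (((hec x (by linarith [hx.1])).differentiableAt).sub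
        (hφdiff x hx.1.le)).differentiableWithinAt
    · rw [interior_Icc]
      intro x hx
      have hx' : x ∈ Icc (1 : ℝ) rstar := ⟨hx.1.le, hx.2.le⟩
      rw [deriv_fun_sub ((hec x (by linarith [hx.1])).differentiableAt) (hφdiff x hx.1.le),
        (hec x (by linarith [hx.1])).deriv]
      linarith [(key x hx').2]
  set M : ℝ := φ 1 * (1 + (p - 1) / ((N : ℝ) - p) * b) with hMdef
  have hM : 0 < M := by positivity
  have hψle : ∀ s : ℝ, 1 ≤ s → ψ s ≤ M := by
    intro s hs
    have h1 : (0 : ℝ) < s ^ (-c) := Real.rpow_pos_of_pos (by linarith) _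
    simp only [hψdef, hMdef, hKdef]
    nlinarith [mul_pos (mul_pos (mul_pos hb hφ1) hq) h1]
  have hIccM : ∀ r ∈ Icc (1 : ℝ) rstar, φ r ≤ M := by
    intro r hr
    have h2 := hψmono (left_mem_Icc.mpr hrstar.le) hr hr.1
    have hψ1 : ψ 1 = φ 1 := by
      simp only [hψdef, Real.one_rpow]
      ring
    simp only at h2
    rw [hψ1] at h2
    have hφψ : φ r ≤ ψ r := by linarith
    linarith [hψle r hr.1]
  have hφleM : ∀ r : ℝ, 1 ≤ r → φ r ≤ M := by
    intro r hr
    rcases le_total r rstar with hcase | hcase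
    · exact hIccM r ⟨hr, hcase⟩
    · have hanti : AntitoneOn φ (Ici rstar) := by
        apply antitoneOn_of_deriv_nonpos (convex_Ici rstar)
        · intro x hx
          exact ((hφdiff x (by linarith [mem_Ici.mp hx])).continuousAt).continuousWithinAt
        · rw [interior_Ici]
          intro x hx
          exact (hφdiff x (by linarith [mem_Ioi.mp hx])).differentiableWithinAt
        · rw [interior_Ici]
          intro x hx
          have hx1 : (1 : ℝ) < x := lt_trans hrstar (mem_Ioi.mp hx)
          have hFx : F x < 0 := by
            have h3 := hFanti (mem_Ici.mpr hrstar.le) (mem_Ici.mpr hx1.le) (mem_Ioi.mp hx)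
            rw [hFstar] at h3
            linarith
          by_contra hpos
          push_neg at hpos
          have h0 : 0 ≤ Real.sign (deriv φ x) * |deriv φ x| ^ (p - 1) :=
            aux_sign_rpow_nonneg hpos.le
          have hxa : (0 : ℝ) < x ^ ((N : ℝ) - 1) := Real.rpow_pos_of_pos (by linarith) _
          have hge : 0 ≤ F x := by
            have heq : F x = x ^ ((N : ℝ) - 1) *
                (Real.sign (deriv φ x) * |deriv φ x| ^ (p - 1)) := by
              simp only [hFdef, radialF]; ring
            rw [heq]
            exact mul_nonneg hxa.le h0
          linarith
      have h1 : φ r ≤ φ rstar := hanti (mem_Ici.mpr le_rfl) (mem_Ici.mpr hcase) hcase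
      have h2 : φ rstar ≤ M := hIccM rstar ⟨hrstar.le, le_rfl⟩
      linarith
  -- integral comparison
  set I : ℝ := ∫ r in Ioi (1 : ℝ), r ^ ((N : ℝ) - 1) * g r with hIdef
  have hle : (∫ r in Ioi (1 : ℝ), r ^ ((N : ℝ) - 1) * g r * φ r ^ p)
      ≤ ∫ r in Ioi (1 : ℝ), r ^ ((N : ℝ) - 1) * g r * M ^ p := by
    apply setIntegral_mono_on hInt (hIg.mul_const (M ^ p)) measurableSet_Ioi
    intro x hx
    have hx1 : (1 : ℝ) < x := mem_Ioi.mp hx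
    have h1 : (0 : ℝ) ≤ x ^ ((N : ℝ) - 1) * g x :=
      mul_nonneg (Real.rpow_pos_of_pos (by linarith) _).le (hgpos x hx1.le).le
    have h2 : φ x ^ p ≤ M ^ p :=
      Real.rpow_le_rpow (hφpos x hx1.le).le (hφleM x hx1.le) hp0.le
    exact mul_le_mul_of_nonneg_left h2 h1
  have hintM : (∫ r in Ioi (1 : ℝ), r ^ ((N : ℝ) - 1) * g r * M ^ p) = I * M ^ p := by
    rw [hIdef]
    exact integral_mul_const _ _
  have hMp : (0 : ℝ) < M ^ p := Real.rpow_pos_of_pos hM p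
  have hIM : 1 ≤ ω * I * M ^ p := by
    rw [hintM] at hle
    calc (1 : ℝ) = ω * ∫ r in Ioi (1 : ℝ), r ^ ((N : ℝ) - 1) * g r * φ r ^ p := hNorm.symm
    _ ≤ ω * (I * M ^ p) := mul_le_mul_of_nonneg_left hle hω.le
    _ = ω * I * M ^ p := by ring
  have hA : 0 < ω * I := by nlinarith [hIM, hMp]
  -- final algebra
  set D : ℝ := 1 + (p - 1) / ((N : ℝ) - p) * b with hDdef
  have hD : 0 < D := by positivity
  rw [div_le_iff₀ hD]
  have hMeq : φ 1 * D = M := by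
    simp only [hMdef, hDdef]
  rw [hMeq]
  have h1 : (ω * I)⁻¹ ≤ M ^ p := by
    rw [inv_eq_one_div, div_le_iff₀ hA]
    nlinarith [hIM]
  have heq : (ω * I) ^ (-(1 : ℝ) / p) = ((ω * I)⁻¹) ^ ((1 : ℝ) / p) := by
    rw [Real.inv_rpow hA.le, ← Real.rpow_neg hA.le, neg_div]
  have h2 : ((ω * I)⁻¹) ^ ((1 : ℝ) / p) ≤ (M ^ p) ^ ((1 : ℝ) / p) :=
    Real.rpow_le_rpow (inv_nonneg.mpr hA.le) h1 (by positivity)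
  have h3 : (M ^ p) ^ ((1 : ℝ) / p) = M := by
    rw [← Real.rpow_mul hM.le, mul_one_div, div_self hp0.ne', Real.rpow_one]
  rw [heq]
  linarith [h2, h3.symm ▸ h2]
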